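/- Let π be a representation of exponential type of ℝ on a Fréchet space E, with space of smooth vectors E^∞ (carrying its canonical Fréchet topology). A subset B ⊆ E^∞ is bounded if and only if the family of orbit maps {γ_v : v ∈ B}, γ_v(t) = π(t)v, is a bounded subset of O_C^exp(ℝ, E), meaning: for every continuous seminorm p on E there exists λ > 0 such that sup_{v∈B, t∈ℝ} e^{−λ|t|} p(γ_v^{(k)}(t)) < ∞ for every k ∈ ℕ. -/

import Mathlib

/-- Derivative of a curve with values in a topological vector space, defined by the
limit of difference quotients. -/
def HasTVSDerivAt {E : Type*} [AddCommGroup E] [Module ℝ E] [TopologicalSpace E]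
    (f : ℝ → E) (f' : E) (t : ℝ) : Prop :=
  Filter.Tendsto (fun h : ℝ => h⁻¹ • (f (t + h) - f t))
    (nhdsWithin 0 {(0 : ℝ)}ᶜ) (nhds f')

private lemma HasTVSDerivAt.unique' {E : Type*} [AddCommGroup E] [Module ℝ E]
    [TopologicalSpace E] [T2Space E] {f : ℝ → E} {a b : E} {t : ℝ}
    (ha : HasTVSDerivAt f a t) (hb : HasTVSDerivAt f b t) : a = b := by
  haveI : Filter.NeBot (nhdsWithin (0:ℝ) {(0:ℝ)}ᶜ) := inferInstance
  exact tendsto_nhds_unique ha hb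

private lemma HasTVSDerivAt.clm_comp' {E F : Type*} [AddCommGroup E] [Module ℝ E]
    [TopologicalSpace E] [AddCommGroup F] [Module ℝ F] [TopologicalSpace F]
    (T : E →L[ℝ] F) {f : ℝ → E} {a : E} {t : ℝ} (h : HasTVSDerivAt f a t) :
    HasTVSDerivAt (fun s => T (f s)) (T a) t := by
  have h2 := (T.continuous.tendsto a).comp h
  unfold HasTVSDerivAt
  exact h2.congr fun u => by simp [Function.comp, map_sub, map_smul]

private lemma HasTVSDerivAt.shift' {E : Type*} [AddCommGroup E] [Module ℝ E]
    [TopologicalSpace E] {f : ℝ → E} {a : E} {s t : ℝ} (h : HasTVSDerivAt f a (s + t)) :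
    HasTVSDerivAt (fun u => f (s + u)) a t := by
  unfold HasTVSDerivAt at h ⊢
  convert h using 2 with u
  rw [add_assoc]

/-- Uniform exponential bound via Baire category. -/
private lemma exp_uniform_bound {E : Type*} [AddCommGroup E] [Module ℝ E] [UniformSpace E]
    [IsUniformAddGroup E] [ContinuousSMul ℝ E] [CompleteSpace E]
    [TopologicalSpace.MetrizableSpace E]
    (π : ℝ → E →L[ℝ] E)
    (hexp : ∀ (v : E) (p : Seminorm ℝ E), Continuous p →
      ∃ lam > 0, ∃ M : ℝ, ∀ t : ℝ, Real.exp (-lam * |t|) * p (π t v) ≤ M)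
    (p : Seminorm ℝ E) (hp : Continuous p) :
    ∃ n : ℕ, ∃ q : Seminorm ℝ E, Continuous q ∧
      ∀ w : E, q w < 1 → ∀ t : ℝ,
        p (π t w) ≤ ((n : ℝ) + 1) * Real.exp (((n : ℝ) + 1) * |t|) := by
  haveI : Nonempty E := ⟨0⟩
  haveI : (Filter.comap (fun x : E × E => x.2 - x.1) (nhds 0)).IsCountablyGenerated :=
    Filter.comap.isCountablyGenerated _ _
  haveI hcg : (uniformity E).IsCountablyGenerated := by
    rw [uniformity_eq_comap_nhds_zero E]
    exact Filter.comap.isCountablyGenerated _ _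
  haveI : BaireSpace E := by
    letI := UniformSpace.pseudoMetricSpace E
    exact BaireSpace.of_completelyPseudoMetrizable
  set F : ℕ → Set E := fun n =>
    {v | ∀ t : ℝ, p (π t v) ≤ ((n : ℝ) + 1) * Real.exp (((n : ℝ) + 1) * |t|)} with hF
  have hclosed : ∀ n, IsClosed (F n) := by
    intro n
    have : F n = ⋂ t : ℝ,
        {v | p (π t v) ≤ ((n : ℝ) + 1) * Real.exp (((n : ℝ) + 1) * |t|)} := by
      ext v; simp [hF, Set.mem_iInter]
    rw [this]
    exact isClosed_iInter fun t =>
      isClosed_le (hp.comp (π t).continuous) continuous_const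
  have hcover : ⋃ n, F n = Set.univ := by
    ext v
    simp only [Set.mem_iUnion, Set.mem_univ, iff_true]
    obtain ⟨lam, hlam, M, hM⟩ := hexp v p hp
    obtain ⟨n, hn⟩ := exists_nat_ge (max lam M)
    refine ⟨n, fun t => ?_⟩
    have h0 := hM t
    have hmul : Real.exp (-lam * |t|) * Real.exp (lam * |t|) = 1 := by
      rw [← Real.exp_add]; ring_nf; exact Real.exp_zero
    have hepos : (0:ℝ) < Real.exp (lam * |t|) := Real.exp_pos _
    have hpM : p (π t v) ≤ M * Real.exp (lam * |t|) := by
      nlinarith [mul_le_mul_of_nonneg_right h0 (le_of_lt hepos), (apply_nonneg p (π t v))]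
    have hMn : M ≤ (n : ℝ) + 1 := by
      have := le_max_right lam M; linarith
    have hln : lam ≤ (n : ℝ) + 1 := by
      have := le_max_left lam M; linarith
    calc p (π t v) ≤ M * Real.exp (lam * |t|) := hpM
      _ ≤ ((n:ℝ)+1) * Real.exp (lam * |t|) :=
          mul_le_mul_of_nonneg_right hMn (Real.exp_nonneg _)
      _ ≤ ((n:ℝ)+1) * Real.exp (((n:ℝ)+1) * |t|) := by
          apply mul_le_mul_of_nonneg_left _ (by positivity)
          exact Real.exp_le_exp.2 (mul_le_mul_of_nonneg_right hln (abs_nonneg t))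
  obtain ⟨n, x, hx⟩ := nonempty_interior_of_iUnion_of_closed hclosed hcover
  -- F n is balanced and convex
  have hbal : Balanced ℝ (F n) := by
    intro a ha
    rintro _ ⟨v, hv, rfl⟩
    intro t
    have : p (π t (a • v)) = |a| * p (π t v) := by
      rw [(π t).map_smul, map_smul_eq_mul, Real.norm_eq_abs]
    rw [this]
    calc |a| * p (π t v) ≤ 1 * p (π t v) :=
          mul_le_mul_of_nonneg_right (by simpa using ha) (apply_nonneg _ _)
      _ = p (π t v) := one_mul _
      _ ≤ _ := hv t
  have hconv : Convex ℝ (F n) := by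
    intro v hv w hw a b ha hb hab
    intro t
    have h1 : p (π t (a • v + b • w)) ≤ a * p (π t v) + b * p (π t w) := by
      rw [map_add]
      refine le_trans (map_add_le_add p _ _) ?_
      rw [(π t).map_smul, (π t).map_smul, map_smul_eq_mul, map_smul_eq_mul, Real.norm_eq_abs,
        Real.norm_eq_abs, abs_of_nonneg ha, abs_of_nonneg hb]
    refine le_trans h1 ?_
    calc a * p (π t v) + b * p (π t w)
        ≤ a * (((n:ℝ)+1) * Real.exp (((n:ℝ)+1) * |t|))
          + b * (((n:ℝ)+1) * Real.exp (((n:ℝ)+1) * |t|)) :=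
          add_le_add (mul_le_mul_of_nonneg_left (hv t) ha)
            (mul_le_mul_of_nonneg_left (hw t) hb)
      _ = ((n:ℝ)+1) * Real.exp (((n:ℝ)+1) * |t|) := by rw [← add_mul, hab, one_mul]
  have hxneg : -x ∈ F n := by
    have := hbal.smul_mem (a := (-1 : ℝ)) (by norm_num) (interior_subset hx)
    simpa using this
  have hzero : (0 : E) ∈ interior (F n) := by
    have h2 := hconv.combo_interior_self_mem_interior hx hxneg
      (a := 1/2) (b := 1/2) (by norm_num) (by norm_num) (by norm_num)
    simpa [smul_neg] using h2
  have hnhds : F n ∈ nhds (0 : E) := mem_interior_iff_mem_nhds.mp hzero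
  have habs : Absorbent ℝ (F n) := absorbent_nhds_zero hnhds
  set q : Seminorm ℝ E := gaugeSeminorm hbal hconv habs with hq
  have hq_le_one : ∀ w ∈ F n, q w ≤ 1 := fun w hw => gauge_le_one_of_mem hw
  have hq_cont : Continuous q := by
    refine Seminorm.continuous (r := 2) (Filter.mem_of_superset hnhds ?_)
    intro w hw
    rw [Seminorm.mem_ball_zero]
    exact lt_of_le_of_lt (hq_le_one w hw) one_lt_two
  refine ⟨n, q, hq_cont, fun w hw t => ?_⟩
  have hwmem : w ∈ F n := gauge_lt_one_subset_self hconv (interior_subset hzero) habs hw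
  exact hwmem t

/-- For a representation of exponential type `π` of `ℝ` on a Fréchet
space `E`, a set `B` of smooth vectors (with iterated orbit derivatives `D v k`, so
`γ_v^{(k)} = D v k` and `π((d/dt)^k)v = D v k 0`) is bounded in the canonical topology
of `E^∞` iff the family of orbit maps `{γ_v : v ∈ B}` is a bounded subset of
`O_C^exp(ℝ, E)`: for every continuous seminorm `p` there is `λ > 0` with
`sup_{v ∈ B, t ∈ ℝ, k} e^{-λ|t|} p(γ_v^{(k)}(t)) < ∞` for each `k`. -/
theorem stmt19 {E : Type*} [AddCommGroup E] [Module ℝ E] [UniformSpace E]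
    [IsUniformAddGroup E] [ContinuousSMul ℝ E] [LocallyConvexSpace ℝ E]
    [CompleteSpace E] [TopologicalSpace.MetrizableSpace E]
    (π : ℝ → E →L[ℝ] E)
    (hπ0 : π 0 = ContinuousLinearMap.id ℝ E)
    (hπadd : ∀ s t : ℝ, π (s + t) = (π s).comp (π t))
    (hπcont : ∀ v : E, Continuous fun t => π t v)
    (hexp : ∀ (v : E) (p : Seminorm ℝ E), Continuous p →
      ∃ lam > 0, ∃ M : ℝ, ∀ t : ℝ, Real.exp (-lam * |t|) * p (π t v) ≤ M)
    (B : Set E) (D : E → ℕ → ℝ → E)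
    (hD0 : ∀ v ∈ B, ∀ t : ℝ, D v 0 t = π t v)
    (hDderiv : ∀ v ∈ B, ∀ (k : ℕ) (t : ℝ), HasTVSDerivAt (D v k) (D v (k + 1) t) t) :
    (∀ p : Seminorm ℝ E, Continuous p → ∀ k : ℕ, ∃ M : ℝ, ∀ v ∈ B, p (D v k 0) ≤ M) ↔
    (∀ p : Seminorm ℝ E, Continuous p → ∃ lam > 0, ∀ k : ℕ, ∃ M : ℝ, ∀ v ∈ B, ∀ t : ℝ,
      Real.exp (-lam * |t|) * p (D v k t) ≤ M) := by
  -- the orbit identity D v k s = π s (D v k 0)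
  have key : ∀ v ∈ B, ∀ (k : ℕ), ∀ s t : ℝ, D v k (s + t) = π s (D v k t) := by
    intro v hv k
    induction k with
    | zero =>
      intro s t
      rw [hD0 v hv, hD0 v hv, hπadd]
      rfl
    | succ k ih =>
      intro s t
      have h1 : HasTVSDerivAt (fun u => D v k (s + u)) (D v (k + 1) (s + t)) t :=
        (hDderiv v hv k (s + t)).shift'
      have h2 : HasTVSDerivAt (fun u => (π s) (D v k u)) ((π s) (D v (k + 1) t)) t :=
        (hDderiv v hv k t).clm_comp' (π s)
      have heq : (fun u => D v k (s + u)) = fun u => (π s) (D v k u) :=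
        funext fun u => ih s u
      rw [heq] at h1
      exact h1.unique' h2
  have keyid : ∀ v ∈ B, ∀ (k : ℕ), ∀ s : ℝ, D v k s = π s (D v k 0) := by
    intro v hv k s
    have := key v hv k s 0
    rwa [add_zero] at this
  constructor
  · intro hL p hp
    obtain ⟨n, q, hq_cont, hbound⟩ := exp_uniform_bound π hexp p hp
    refine ⟨(n : ℝ) + 1, by positivity, fun k => ?_⟩
    obtain ⟨M, hM⟩ := hL q hq_cont k
    set C : ℝ := max M 0 with hC
    have hC0 : 0 ≤ C := le_max_right _ _
    refine ⟨(C + 1) * ((n : ℝ) + 1), fun v hv t => ?_⟩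
    set w := D v k 0 with hw
    have hDt : D v k t = π t w := keyid v hv k t
    have hqw : q w ≤ C := le_trans (hM v hv) (le_max_left _ _)
    have hscaled : q ((C + 1)⁻¹ • w) < 1 := by
      rw [map_smul_eq_mul, Real.norm_eq_abs, abs_of_pos (by positivity : (0:ℝ) < (C+1)⁻¹)]
      rw [inv_mul_lt_iff₀ (by positivity : (0:ℝ) < C + 1)]
      linarith
    have hb := hbound ((C + 1)⁻¹ • w) hscaled t
    have hps : p (π t ((C + 1)⁻¹ • w)) = (C + 1)⁻¹ * p (π t w) := by
      rw [(π t).map_smul, map_smul_eq_mul, Real.norm_eq_abs,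
        abs_of_pos (by positivity : (0:ℝ) < (C+1)⁻¹)]
    rw [hps] at hb
    have hpw : p (π t w) ≤ (C + 1) * (((n:ℝ)+1) * Real.exp (((n:ℝ)+1) * |t|)) := by
      rw [inv_mul_le_iff₀ (by positivity : (0:ℝ) < C + 1)] at hb
      exact hb
    have hmul : Real.exp (-((n:ℝ)+1) * |t|) * Real.exp (((n:ℝ)+1) * |t|) = 1 := by
      rw [← Real.exp_add]; ring_nf; exact Real.exp_zero
    have hepos : (0:ℝ) < Real.exp (-((n:ℝ)+1) * |t|) := Real.exp_pos _
    rw [hDt]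
    calc Real.exp (-((n:ℝ)+1) * |t|) * p (π t w)
        ≤ Real.exp (-((n:ℝ)+1) * |t|) * ((C + 1) * (((n:ℝ)+1) * Real.exp (((n:ℝ)+1) * |t|))) :=
          mul_le_mul_of_nonneg_left hpw hepos.le
      _ = (C + 1) * (((n:ℝ)+1)) * (Real.exp (-((n:ℝ)+1) * |t|) * Real.exp (((n:ℝ)+1) * |t|)) := by
          ring
      _ = (C + 1) * ((n:ℝ)+1) := by rw [hmul, mul_one]
  · intro hR p hp k
    obtain ⟨lam, hlam, h⟩ := hR p hp
    obtain ⟨M, hM⟩ := h k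
    refine ⟨M, fun v hv => ?_⟩
    have := hM v hv 0
    simpa using this
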